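/- Let ψ : ℝ⁴ → Cl be differentiable and satisfy the Killing spin field equation with coefficient functions ω_μ^{νσ}, H_μ^{νi}, A_μ^{ij}. Then for every tangent index μ ∈ {0,1,2,3} and every σ ∈ {0,1,2,3}: ∂_σ( reverse(ψ)·e_μ·ψ ) = Σ_{β=0}^{3} ( Σ_{α=0}^{3} η_{μα}·ω_σ^{αβ} ) · reverse(ψ)·e_β·ψ + Σ_{i=4}^{9} ( Σ_{α=0}^{3} η_{μα}·H_σ^{αi} ) · reverse(ψ)·e_i·ψ. (The tangent frame vectors 𝐞_μ = reverse(ψ)e_μψ satisfy d𝐞_μ = ω_μ^β 𝐞_β + H_μ^i 𝐞_i.) -/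

import Mathlib

open CliffordAlgebra

noncomputable section

/-- The Minkowski signs `(-1,1,…,1)` on `ℝ^{10}`. -/
def ηv : Fin 10 → ℝ := fun I => if I = 0 then -1 else 1

/-- The Minkowski metric `η = diag(-1,1,…,1)` as a matrix. -/
def ηm : Fin 10 → Fin 10 → ℝ := fun I J => if I = J then ηv I else 0

/-- The Minkowski quadratic form `Q(x) = -x₀² + x₁² + ⋯ + x₉²` on `ℝ^{10}`. -/
def Qm : QuadraticForm ℝ (Fin 10 → ℝ) := QuadraticMap.weightedSumSquares ℝ ηv

/-- The Clifford algebra of the Minkowski form on `ℝ^{10}`. -/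
abbrev Cl := CliffordAlgebra Qm

/-- The images `e_I` of the standard basis vectors of `ℝ^{10}` in `Cl`. -/
def e (I : Fin 10) : Cl := ι Qm (Pi.single I 1)

/-- Inclusion of tangent indices `{0,…,3}` into `{0,…,9}`. -/
def tIdx (μ : Fin 4) : Fin 10 := ⟨μ.1, by omega⟩

/-- Inclusion of normal indices `{4,…,9}` into `{0,…,9}`. -/
def nIdx (i : Fin 6) : Fin 10 := ⟨i.1 + 4, by omega⟩

/-- The Clifford-algebra-valued coefficient `K_μ` of the Killing spin field equation:
`K_μ = (1/4)·Σ_{ν,σ} ω_μ^{νσ} e_ν e_σ + (1/2)·Σ_{ν,i} H_μ^{νi} e_ν e_i + (1/4)·Σ_{i,j} A_μ^{ij} e_i e_j`. -/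
def Kfield (ω : Fin 4 → Fin 4 → Fin 4 → (Fin 4 → ℝ) → ℝ)
    (H : Fin 4 → Fin 4 → Fin 6 → (Fin 4 → ℝ) → ℝ)
    (A : Fin 4 → Fin 6 → Fin 6 → (Fin 4 → ℝ) → ℝ)
    (μ : Fin 4) (x : Fin 4 → ℝ) : Cl :=
  (1/4 : ℝ) • ∑ ν : Fin 4, ∑ σ : Fin 4, ω μ ν σ x • (e (tIdx ν) * e (tIdx σ))
    + (1/2 : ℝ) • ∑ ν : Fin 4, ∑ i : Fin 6, H μ ν i x • (e (tIdx ν) * e (nIdx i))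
    + (1/4 : ℝ) • ∑ i : Fin 6, ∑ j : Fin 6, A μ i j x • (e (nIdx i) * e (nIdx j))


/-! Basic Clifford relations -/

lemma Qm_single (I : Fin 10) (c : ℝ) : Qm (Pi.single I c) = ηv I * (c * c) := by
  rw [Qm, QuadraticMap.weightedSumSquares_apply]
  rw [Finset.sum_eq_single I]
  · simp
  · intro b _ hb; simp [Pi.single_apply, Ne.symm hb]
  · simp

lemma polar_single (I J : Fin 10) :
    QuadraticMap.polar Qm (Pi.single I 1) (Pi.single J 1) = 2 * ηm I J := by
  unfold QuadraticMap.polar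
  by_cases h : I = J
  · subst h
    rw [← Pi.single_add, Qm_single, Qm_single]
    simp [ηm]; ring
  · simp only [Qm, QuadraticMap.weightedSumSquares_apply]
    rw [← Finset.sum_sub_distrib, ← Finset.sum_sub_distrib]
    rw [show ηm I J = 0 by simp [ηm, h]]
    rw [Finset.sum_eq_zero]
    · ring
    · intro k _
      by_cases hI : k = I
      · subst hI; simp [Pi.single_apply, Ne.symm h]; try ring
      · by_cases hJ : k = J
        · subst hJ; simp [Pi.single_apply, h, hI]; try ring
        · simp [Pi.single_apply, Ne.symm hI, Ne.symm hJ]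

lemma ee (I J : Fin 10) : e I * e J + e J * e I = algebraMap ℝ Cl (2 * ηm I J) := by
  rw [e, e, ι_mul_ι_add_swap, polar_single]

lemma e_mul_self (I : Fin 10) : e I * e I = algebraMap ℝ Cl (ηv I) := by
  rw [e, ι_sq_scalar, Qm_single]
  norm_num

lemma e_anticomm {I J : Fin 10} (h : I ≠ J) : e I * e J = -(e J * e I) := by
  have := ee I J
  rw [show ηm I J = 0 by simp [ηm, h], mul_zero, map_zero] at this
  exact eq_neg_of_add_eq_zero_left this

/-! Spanning set and finite-dimensionality -/

def prodE (l : List (Fin 10)) : Cl := (l.map e).prod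

@[simp] lemma prodE_nil : prodE [] = 1 := rfl
@[simp] lemma prodE_cons (i : Fin 10) (l : List (Fin 10)) :
    prodE (i :: l) = e i * prodE l := by simp [prodE]

def P (s : Finset (Fin 10)) : Cl := prodE (s.sort (· ≤ ·))

lemma P_of_sorted {l : List (Fin 10)} (hl : l.Pairwise (· < ·)) :
    P l.toFinset = prodE l := by
  rw [P, (List.toFinset_sort (· ≤ ·) hl.nodup).2 (hl.imp le_of_lt)]

lemma P_insert {j : Fin 10} {t : Finset (Fin 10)} (h1 : ∀ b ∈ t, j < b) :
    P (insert j t) = e j * P t := by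
  have hj : j ∉ t := fun hm => lt_irrefl j (h1 j hm)
  rw [P, Finset.sort_insert (· ≤ ·) (fun b hb => (h1 b hb).le) hj, prodE_cons, P]

lemma keymul : ∀ (l : List (Fin 10)), l.Pairwise (· < ·) → ∀ i : Fin 10,
    e i * prodE l ∈ Submodule.span ℝ (P '' {t : Finset (Fin 10) | t ⊆ insert i l.toFinset}) := by
  intro l
  induction l with
  | nil =>
    intro _ i
    refine Submodule.subset_span ⟨{i}, by simp, ?_⟩
    simp [P]
  | cons j l' IH =>
    intro hl i
    have hjl : ∀ k ∈ l', j < k := fun k hk => (List.pairwise_cons.1 hl).1 k hk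
    have hl' : l'.Pairwise (· < ·) := (List.pairwise_cons.1 hl).2
    rcases lt_trichotomy i j with hij | hij | hij
    · -- i < j : the product is itself a sorted product
      have hs : (i :: j :: l').Pairwise (· < ·) := by
        rw [List.pairwise_cons]
        refine ⟨?_, hl⟩
        intro b hb
        rcases List.mem_cons.1 hb with h | h
        · exact h ▸ hij
        · exact hij.trans (hjl b h)
      refine Submodule.subset_span ⟨(i :: j :: l').toFinset, ?_, ?_⟩
      · intro k hk
        simp only [List.mem_toFinset, List.mem_cons, Finset.mem_insert] at hk ⊢
        tauto
      · rw [P_of_sorted hs, prodE_cons]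
    · -- i = j
      subst hij
      rw [prodE_cons, ← mul_assoc, e_mul_self, Algebra.algebraMap_eq_smul_one, smul_mul_assoc,
        one_mul, ← P_of_sorted hl']
      refine Submodule.smul_mem _ _ (Submodule.subset_span ⟨l'.toFinset, ?_, rfl⟩)
      intro k hk
      simp only [List.mem_toFinset, Finset.mem_insert, List.mem_cons] at hk ⊢
      tauto
    · -- j < i : anticommute past e j
      have hne : i ≠ j := hij.ne'
      have heq : e i * prodE (j :: l') = -(e j * (e i * prodE l')) := by
        rw [prodE_cons, ← mul_assoc, e_anticomm hne, neg_mul, mul_assoc]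
      rw [heq]
      refine Submodule.neg_mem _ ?_
      -- e i * prodE l' lies in the span over subsets of insert i l'.toFinset
      have hmem := IH hl' i
      -- multiplying by e j lands in the target span
      set N := Submodule.span ℝ (P '' {t : Finset (Fin 10) | t ⊆ insert i (j :: l').toFinset})
      have hbase : ∀ t : Finset (Fin 10), t ⊆ insert i l'.toFinset →
          e j * P t ∈ N := by
        intro t ht
        have hlt : ∀ b ∈ t, j < b := by
          intro b hb
          rcases Finset.mem_insert.1 (ht hb) with h | h
          · simpa [h] using hij
          · exact hjl b (List.mem_toFinset.1 h)
        rw [← P_insert hlt]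
        refine Submodule.subset_span ⟨insert j t, ?_, rfl⟩
        intro k hk
        simp only [Finset.mem_insert, List.mem_toFinset, List.mem_cons] at hk ⊢
        rcases hk with rfl | hk
        · right; left; rfl
        · rcases Finset.mem_insert.1 (ht hk) with h | h
          · left; exact h
          · right; right; simpa using h
      refine Submodule.span_induction (p := fun x _ => e j * x ∈ N) ?_ ?_ ?_ ?_ hmem
      · rintro x ⟨t, ht, rfl⟩
        exact hbase t ht
      · simpa using N.zero_mem
      · intro x y hx hy ihx ihy
        rw [mul_add]; exact N.add_mem ihx ihy
      · intro r x hx ih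
        rw [mul_smul_comm]; exact N.smul_mem r ih

lemma e_mul_mem {x : Cl} (i : Fin 10) (hx : x ∈ Submodule.span ℝ (Set.range P)) :
    e i * x ∈ Submodule.span ℝ (Set.range P) := by
  induction hx using Submodule.span_induction with
  | mem y hy =>
    obtain ⟨s, rfl⟩ := hy
    have h := keymul (s.sort (· ≤ ·)) (Finset.sortedLT_sort s).pairwise i
    have hP : P s = prodE (s.sort (· ≤ ·)) := rfl
    rw [hP]
    refine Submodule.span_le.2 ?_ h
    rintro y ⟨t, _, rfl⟩
    exact Submodule.subset_span ⟨t, rfl⟩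
  | zero => simpa using Submodule.zero_mem _
  | add a b ha hb iha ihb => rw [mul_add]; exact Submodule.add_mem _ iha ihb
  | smul r a ha ih => rw [mul_smul_comm]; exact Submodule.smul_mem _ r ih

lemma prodE_mul_mem {x : Cl} (l : List (Fin 10)) (hx : x ∈ Submodule.span ℝ (Set.range P)) :
    prodE l * x ∈ Submodule.span ℝ (Set.range P) := by
  induction l with
  | nil => simpa using hx
  | cons i l' IH =>
    rw [prodE_cons, mul_assoc]
    exact e_mul_mem i IH

lemma mul_mem_span {x y : Cl} (hx : x ∈ Submodule.span ℝ (Set.range P))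
    (hy : y ∈ Submodule.span ℝ (Set.range P)) :
    x * y ∈ Submodule.span ℝ (Set.range P) := by
  induction hx using Submodule.span_induction with
  | mem a ha =>
    obtain ⟨s, rfl⟩ := ha
    exact prodE_mul_mem (s.sort (· ≤ ·)) hy
  | zero => simpa using Submodule.zero_mem _
  | add a b ha hb iha ihb => rw [add_mul]; exact Submodule.add_mem _ iha ihb
  | smul r a ha ih => rw [smul_mul_assoc]; exact Submodule.smul_mem _ r ih

lemma span_P_top : Submodule.span ℝ (Set.range P) = ⊤ := by
  rw [eq_top_iff]
  intro x hx
  clear hx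
  induction x using CliffordAlgebra.induction with
  | algebraMap r =>
    rw [Algebra.algebraMap_eq_smul_one]
    refine Submodule.smul_mem _ r (Submodule.subset_span ⟨∅, ?_⟩)
    simp [P]
  | ι v =>
    have hv : v = ∑ I : Fin 10, (v I) • (Pi.single I (1 : ℝ) : Fin 10 → ℝ) := by
      funext k
      simp [Pi.single_apply]
    rw [hv, map_sum]
    refine Submodule.sum_mem _ fun I _ => ?_
    rw [map_smul]
    refine Submodule.smul_mem _ _ (Submodule.subset_span ⟨{I}, ?_⟩)
    simp [P, e]
  | mul a b ha hb => exact mul_mem_span ha hb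
  | add a b ha hb => exact Submodule.add_mem _ ha hb

instance : Module.Finite ℝ Cl :=
  ⟨⟨(Set.finite_range P).toFinset, by
    rw [Set.Finite.coe_toFinset]; exact span_P_top⟩⟩

/-! Index and metric lemmas -/


lemma tIdx_ne_nIdx (ν : Fin 4) (i : Fin 6) : tIdx ν ≠ nIdx i := by
  simp only [tIdx, nIdx, Ne, Fin.ext_iff]
  omega

lemma ηm_tn (ν : Fin 4) (i : Fin 6) : ηm (tIdx ν) (nIdx i) = 0 := by
  simp [ηm, tIdx_ne_nIdx ν i]

/-! Commutator identities -/

lemma ee_smul (I J : Fin 10) : e I * e J = (2 * ηm I J) • (1 : Cl) - e J * e I := by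
  have h := ee I J
  rw [Algebra.algebraMap_eq_smul_one] at h
  exact eq_sub_of_add_eq h

lemma comm3 (a b c : Fin 10) :
    e a * (e b * e c) - (e b * e c) * e a = (2 * ηm a b) • e c - (2 * ηm a c) • e b := by
  have h1 := ee_smul a b
  have h2 := ee_smul a c
  calc e a * (e b * e c) - (e b * e c) * e a
      = (e a * e b) * e c - (e b * e c) * e a := by rw [← mul_assoc]
    _ = ((2 * ηm a b) • (1 : Cl) - e b * e a) * e c - (e b * e c) * e a := by rw [h1]
    _ = (2 * ηm a b) • e c - e b * (e a * e c) - (e b * e c) * e a := by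
        rw [sub_mul, smul_mul_assoc, one_mul, mul_assoc]
    _ = (2 * ηm a b) • e c - e b * ((2 * ηm a c) • (1 : Cl) - e c * e a)
          - (e b * e c) * e a := by rw [h2]
    _ = (2 * ηm a b) • e c - (2 * ηm a c) • e b := by
        rw [mul_sub, mul_smul_comm, mul_one, ← mul_assoc]
        abel

lemma reverse_e (I : Fin 10) : reverse (Q := Qm) (e I) = e I := reverse_ι _

/-! The reverse of `K` -/


section Kprops

variable (ω : Fin 4 → Fin 4 → Fin 4 → (Fin 4 → ℝ) → ℝ)
    (H : Fin 4 → Fin 4 → Fin 6 → (Fin 4 → ℝ) → ℝ)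
    (A : Fin 4 → Fin 6 → Fin 6 → (Fin 4 → ℝ) → ℝ)

lemma revK (hω : ∀ μ ν σ x, ω μ ν σ x = - ω μ σ ν x)
    (hA : ∀ μ i j x, A μ i j x = - A μ j i x) (σ : Fin 4) (x : Fin 4 → ℝ) :
    reverse (Q := Qm) (Kfield ω H A σ x) = - Kfield ω H A σ x := by
  rw [Kfield]
  simp only [map_add, map_smul, map_sum, reverse.map_mul, reverse_e]
  have hS1 : ∑ ν : Fin 4, ∑ ρ : Fin 4, ω σ ν ρ x • (e (tIdx ρ) * e (tIdx ν))
      = - ∑ ν : Fin 4, ∑ ρ : Fin 4, ω σ ν ρ x • (e (tIdx ν) * e (tIdx ρ)) := by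
    rw [Finset.sum_comm, ← Finset.sum_neg_distrib]
    refine Finset.sum_congr rfl fun a _ => ?_
    rw [← Finset.sum_neg_distrib]
    refine Finset.sum_congr rfl fun b _ => ?_
    rw [hω σ b a x, neg_smul]
  have hS2 : ∑ ν : Fin 4, ∑ i : Fin 6, H σ ν i x • (e (nIdx i) * e (tIdx ν))
      = - ∑ ν : Fin 4, ∑ i : Fin 6, H σ ν i x • (e (tIdx ν) * e (nIdx i)) := by
    rw [← Finset.sum_neg_distrib]
    refine Finset.sum_congr rfl fun a _ => ?_
    rw [← Finset.sum_neg_distrib]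
    refine Finset.sum_congr rfl fun b _ => ?_
    rw [e_anticomm (Ne.symm (tIdx_ne_nIdx a b)), smul_neg]
  have hS3 : ∑ i : Fin 6, ∑ j : Fin 6, A σ i j x • (e (nIdx j) * e (nIdx i))
      = - ∑ i : Fin 6, ∑ j : Fin 6, A σ i j x • (e (nIdx i) * e (nIdx j)) := by
    rw [Finset.sum_comm, ← Finset.sum_neg_distrib]
    refine Finset.sum_congr rfl fun a _ => ?_
    rw [← Finset.sum_neg_distrib]
    refine Finset.sum_congr rfl fun b _ => ?_
    rw [hA σ b a x, neg_smul]
  rw [hS1, hS2, hS3]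
  simp only [smul_neg]
  abel

lemma commK (hω : ∀ μ ν σ x, ω μ ν σ x = - ω μ σ ν x)
    (μ σ : Fin 4) (x : Fin 4 → ℝ) :
    e (tIdx μ) * Kfield ω H A σ x - Kfield ω H A σ x * e (tIdx μ)
      = ∑ β : Fin 4, (∑ α : Fin 4, ηm (tIdx μ) (tIdx α) * ω σ α β x) • e (tIdx β)
        + ∑ i : Fin 6, (∑ α : Fin 4, ηm (tIdx μ) (tIdx α) * H σ α i x) • e (nIdx i) := by
  set Dmap : Cl →ₗ[ℝ] Cl :=
    LinearMap.mulLeft ℝ (e (tIdx μ)) - LinearMap.mulRight ℝ (e (tIdx μ)) with hDmap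
  have hDapp : ∀ m : Cl, Dmap m = e (tIdx μ) * m - m * e (tIdx μ) := fun m => rfl
  have hLHS : e (tIdx μ) * Kfield ω H A σ x - Kfield ω H A σ x * e (tIdx μ)
      = Dmap (Kfield ω H A σ x) := (hDapp _).symm
  rw [hLHS]
  simp only [Kfield, map_add, map_smul, map_sum]
  have hterm : ∀ a b : Fin 10, Dmap (e a * e b)
      = (2 * ηm (tIdx μ) a) • e b - (2 * ηm (tIdx μ) b) • e a := by
    intro a b
    rw [hDapp]
    exact comm3 (tIdx μ) a b
  simp only [hterm]
  -- the A-term vanishes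
  have hT3 : ∑ i : Fin 6, ∑ j : Fin 6,
      A σ i j x • ((2 * ηm (tIdx μ) (nIdx i)) • e (nIdx j)
        - (2 * ηm (tIdx μ) (nIdx j)) • e (nIdx i)) = 0 := by
    refine Finset.sum_eq_zero fun i _ => Finset.sum_eq_zero fun j _ => ?_
    rw [ηm_tn, ηm_tn]
    simp
  -- the H-term
  have hT2 : (1/2 : ℝ) • ∑ ν : Fin 4, ∑ i : Fin 6,
      H σ ν i x • ((2 * ηm (tIdx μ) (tIdx ν)) • e (nIdx i)
        - (2 * ηm (tIdx μ) (nIdx i)) • e (tIdx ν))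
      = ∑ i : Fin 6, (∑ α : Fin 4, ηm (tIdx μ) (tIdx α) * H σ α i x) • e (nIdx i) := by
    have : ∀ ν : Fin 4, ∀ i : Fin 6,
        H σ ν i x • ((2 * ηm (tIdx μ) (tIdx ν)) • e (nIdx i)
          - (2 * ηm (tIdx μ) (nIdx i)) • e (tIdx ν))
        = (H σ ν i x * (2 * ηm (tIdx μ) (tIdx ν))) • e (nIdx i) := by
      intro ν i
      rw [ηm_tn]
      rw [smul_sub, smul_smul, smul_smul]
      norm_num
    simp only [this]
    rw [Finset.sum_comm, Finset.smul_sum]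
    refine Finset.sum_congr rfl fun i _ => ?_
    rw [Finset.smul_sum, Finset.sum_smul]
    refine Finset.sum_congr rfl fun ν _ => ?_
    rw [smul_smul]
    congr 1
    ring
  -- the ω-term
  have hT1 : (1/4 : ℝ) • ∑ ν : Fin 4, ∑ ρ : Fin 4,
      ω σ ν ρ x • ((2 * ηm (tIdx μ) (tIdx ν)) • e (tIdx ρ)
        - (2 * ηm (tIdx μ) (tIdx ρ)) • e (tIdx ν))
      = ∑ β : Fin 4, (∑ α : Fin 4, ηm (tIdx μ) (tIdx α) * ω σ α β x) • e (tIdx β) := by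
    have hsplit : ∀ ν ρ : Fin 4,
        ω σ ν ρ x • ((2 * ηm (tIdx μ) (tIdx ν)) • e (tIdx ρ)
          - (2 * ηm (tIdx μ) (tIdx ρ)) • e (tIdx ν))
        = (ω σ ν ρ x * (2 * ηm (tIdx μ) (tIdx ν))) • e (tIdx ρ)
          - (ω σ ν ρ x * (2 * ηm (tIdx μ) (tIdx ρ))) • e (tIdx ν) := by
      intro ν ρ
      rw [smul_sub, smul_smul, smul_smul]
    simp only [hsplit, Finset.sum_sub_distrib]
    have hG : ∑ ν : Fin 4, ∑ ρ : Fin 4, (ω σ ν ρ x * (2 * ηm (tIdx μ) (tIdx ρ))) • e (tIdx ν)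
        = - ∑ ν : Fin 4, ∑ ρ : Fin 4,
            (ω σ ν ρ x * (2 * ηm (tIdx μ) (tIdx ν))) • e (tIdx ρ) := by
      rw [Finset.sum_comm, ← Finset.sum_neg_distrib]
      refine Finset.sum_congr rfl fun a _ => ?_
      rw [← Finset.sum_neg_distrib]
      refine Finset.sum_congr rfl fun b _ => ?_
      rw [hω σ b a x, neg_mul, neg_smul]
    rw [hG, sub_neg_eq_add, ← two_smul ℝ, smul_smul]
    norm_num
    rw [Finset.sum_comm, Finset.smul_sum]
    refine Finset.sum_congr rfl fun β _ => ?_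
    rw [Finset.smul_sum, Finset.sum_smul]
    refine Finset.sum_congr rfl fun ν _ => ?_
    rw [smul_smul]
    congr 1
    ring
  rw [hT3, hT1, hT2]
  simp

end Kprops

/-- If `ψ` satisfies the Killing spin field equation, the tangent frame vectors
`𝐞_μ = reverse(ψ) e_μ ψ` satisfy `d𝐞_μ = ω_μ^β 𝐞_β + H_μ^i 𝐞_i`. -/
theorem stmt_1 (nCl : AddGroupNorm Cl)
    (hns : ∀ (c : ℝ) (x : Cl), nCl (c • x) ≤ ‖c‖ * nCl x) :
    letI : NormedAddCommGroup Cl := nCl.toNormedAddCommGroup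
    letI : NormedSpace ℝ Cl := { norm_smul_le := hns }
    ∀ (ψ : (Fin 4 → ℝ) → Cl)
      (ω : Fin 4 → Fin 4 → Fin 4 → (Fin 4 → ℝ) → ℝ)
      (H : Fin 4 → Fin 4 → Fin 6 → (Fin 4 → ℝ) → ℝ)
      (A : Fin 4 → Fin 6 → Fin 6 → (Fin 4 → ℝ) → ℝ),
      Differentiable ℝ ψ →
      (∀ μ ν σ x, ω μ ν σ x = - ω μ σ ν x) →
      (∀ μ i j x, A μ i j x = - A μ j i x) →
      (∀ μ x, fderiv ℝ ψ x (Pi.single μ 1) = Kfield ω H A μ x * ψ x) →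
      ∀ (μ σ : Fin 4) (x : Fin 4 → ℝ),
        fderiv ℝ (fun y => reverse (Q := Qm) (ψ y) * e (tIdx μ) * ψ y) x (Pi.single σ 1) =
          ∑ β : Fin 4, (∑ α : Fin 4, ηm (tIdx μ) (tIdx α) * ω σ α β x) •
              (reverse (Q := Qm) (ψ x) * e (tIdx β) * ψ x)
          + ∑ i : Fin 6, (∑ α : Fin 4, ηm (tIdx μ) (tIdx α) * H σ α i x) •
              (reverse (Q := Qm) (ψ x) * e (nIdx i) * ψ x) := by
  letI : NormedAddCommGroup Cl := nCl.toNormedAddCommGroup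
  letI : NormedSpace ℝ Cl := { norm_smul_le := hns }
  intro ψ ω H A hdiff hω hA hK μ σ x
  -- the bilinear map (a, b) ↦ reverse a * e μ * b
  let Lb : Cl →ₗ[ℝ] Cl →ₗ[ℝ] Cl := LinearMap.mk₂ ℝ
    (fun a b => reverse (Q := Qm) a * e (tIdx μ) * b)
    (fun a a' b => by simp [add_mul])
    (fun c a b => by simp [smul_mul_assoc])
    (fun a b b' => by simp [mul_add])
    (fun c a b => by simp [mul_smul_comm])
  let Lc : Cl →L[ℝ] Cl →L[ℝ] Cl :=
    LinearMap.toContinuousLinearMap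
      ((LinearMap.toContinuousLinearMap :
        (Cl →ₗ[ℝ] Cl) ≃ₗ[ℝ] (Cl →L[ℝ] Cl)).toLinearMap.comp Lb)
  have hLc : ∀ a b : Cl, Lc a b = reverse (Q := Qm) a * e (tIdx μ) * b := fun a b => rfl
  have heqfun : (fun y => reverse (Q := Qm) (ψ y) * e (tIdx μ) * ψ y)
      = fun y => Lc (ψ y) (ψ y) := rfl
  rw [heqfun, Lc.fderiv_of_bilinear (hdiff x) (hdiff x)]
  rw [ContinuousLinearMap.add_apply]
  simp only [ContinuousLinearMap.precompR, ContinuousLinearMap.precompL,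
    ContinuousLinearMap.comp_apply, ContinuousLinearMap.flip_apply,
    ContinuousLinearMap.compL_apply]
  rw [hK σ x, hLc, hLc]
  -- rewrite the reverse of the product
  have hrev : reverse (Q := Qm) (Kfield ω H A σ x * ψ x)
      = reverse (Q := Qm) (ψ x) * (- Kfield ω H A σ x) := by
    rw [reverse.map_mul, revK ω H A hω hA]
  rw [hrev]
  have key : reverse (Q := Qm) (ψ x) * e (tIdx μ) * (Kfield ω H A σ x * ψ x)
      + reverse (Q := Qm) (ψ x) * (- Kfield ω H A σ x) * e (tIdx μ) * ψ x
      = reverse (Q := Qm) (ψ x) *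
          ((e (tIdx μ) * Kfield ω H A σ x - Kfield ω H A σ x * e (tIdx μ)) * ψ x) := by
    noncomm_ring
  rw [key, commK ω H A hω μ σ x]
  rw [add_mul, mul_add, Finset.sum_mul, Finset.sum_mul, Finset.mul_sum, Finset.mul_sum]
  congr 1 <;> refine Finset.sum_congr rfl fun k _ => ?_ <;>
    rw [smul_mul_assoc, mul_smul_comm, mul_assoc]
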